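/- If f_1(n) := Σ_{k≥0} a(n,k)·a(n, k - 2^n), then f_1(n) = f_0(n-1) + 2 f_1(n-1) for all n ≥ 1, where f_0(n) := Σ_{k≥0} a(n,k)^2. -/
import Mathlib

open Polynomial

noncomputable def F (n : ℕ) : Polynomial ℤ :=
  ∏ i ∈ Finset.range n, (1 + X ^ (2 ^ i) + X ^ (2 ^ (i + 1)))

noncomputable def a (n : ℕ) (k : ℤ) : ℤ :=
  if 0 ≤ k then (F n).coeff k.toNat else 0

noncomputable def f0 (n : ℕ) : ℤ := ∑ᶠ k : ℕ, (a n k) ^ 2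

noncomputable def f1 (n : ℕ) : ℤ := ∑ᶠ k : ℕ, a n k * a n ((k : ℤ) - 2 ^ n)

lemma a_neg (n : ℕ) (k : ℤ) (h : k < 0) : a n k = 0 := by
  simp [a, not_le.mpr h]

lemma F_natDegree (n : ℕ) : (F n).natDegree ≤ 2 ^ (n + 1) - 2 := by
  refine le_trans (natDegree_prod_le _ _) ?_
  have h1 : ∀ i ∈ Finset.range n,
      ((1 : ℤ[X]) + X ^ (2 ^ i) + X ^ (2 ^ (i + 1))).natDegree ≤ 2 ^ (i + 1) := by
    intro i _
    compute_degree
    exact sup_le (Nat.pow_le_pow_right (by norm_num) (by omega)) le_rfl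
  refine le_trans (Finset.sum_le_sum h1) ?_
  clear h1
  induction n with
  | zero => simp
  | succ n ih =>
    rw [Finset.sum_range_succ]
    have e1 : (2:ℕ) ^ (n + 1 + 1) = 2 ^ (n + 1) * 2 := pow_succ 2 (n+1)
    have e2 : (2:ℕ) ^ (n + 1) = 2 ^ n * 2 := pow_succ 2 n
    have : 1 ≤ (2:ℕ) ^ n := Nat.one_le_two_pow
    omega

lemma a_big (n : ℕ) (k : ℤ) (h : 2 * (2:ℤ) ^ n - 1 ≤ k) : a n k = 0 := by
  have hm1 : 1 ≤ (2:ℕ) ^ n := Nat.one_le_two_pow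
  have hc : (((2:ℕ) ^ n : ℕ) : ℤ) = 2 ^ n := by push_cast; ring
  have e : (2:ℕ) ^ (n + 1) = 2 ^ n * 2 := pow_succ 2 n
  have hd := F_natDegree n
  rw [← hc] at h
  have h0 : 0 ≤ k := by omega
  rw [a, if_pos h0]
  exact coeff_eq_zero_of_natDegree_lt (by omega)

lemma a_succ (m : ℕ) (k : ℤ) :
    a (m + 1) k = a m k + a m (k - 2 ^ m) + a m (k - 2 * 2 ^ m) := by
  have hc : (((2:ℕ) ^ m : ℕ) : ℤ) = 2 ^ m := by push_cast; ring
  have hc2 : (((2:ℕ) ^ (m+1) : ℕ) : ℤ) = 2 * 2 ^ m := by push_cast; ring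
  by_cases h0 : 0 ≤ k
  · have hF : F (m + 1) = F m + F m * X ^ (2 ^ m) + F m * X ^ (2 ^ (m + 1)) := by
      rw [F, Finset.prod_range_succ, ← F]; ring
    have E1 : ((F m) * X ^ (2 ^ m)).coeff k.toNat = a m (k - 2 ^ m) := by
      rw [coeff_mul_X_pow', a, ← hc]
      split_ifs with h1 h2
      · congr 1; omega
      · omega
      · omega
      · rfl
    have E2 : ((F m) * X ^ (2 ^ (m + 1))).coeff k.toNat = a m (k - 2 * 2 ^ m) := by
      rw [coeff_mul_X_pow', a, ← hc2]
      split_ifs with h1 h2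
      · congr 1; omega
      · omega
      · omega
      · rfl
    have L : a (m + 1) k = (F (m + 1)).coeff k.toNat := by rw [a, if_pos h0]
    have R : a m k = (F m).coeff k.toNat := by rw [a, if_pos h0]
    rw [L, hF, coeff_add, coeff_add, E1, E2, R]
  · push_neg at h0
    have hQ : (0:ℤ) < 2 ^ m := by positivity
    rw [a_neg _ _ h0, a_neg _ _ h0, a_neg _ _ (by linarith), a_neg _ _ (by linarith)]
    ring

lemma shift_sum (h : ℤ → ℤ) (α N : ℕ) (hαN : α ≤ N)
    (h0 : ∀ j : ℤ, j < 0 → h j = 0) (h1 : ∀ j : ℤ, (N:ℤ) - α ≤ j → h j = 0) :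
    ∑ k ∈ Finset.range N, h ((k:ℤ) - α) = ∑ k ∈ Finset.range N, h k := by
  have step1 : ∑ k ∈ Finset.range N, h ((k:ℤ) - α) = ∑ k ∈ Finset.Ico α N, h ((k:ℤ) - α) := by
    rw [Finset.range_eq_Ico,
      ← Finset.sum_Ico_consecutive (fun k : ℕ => h ((k:ℤ) - α)) (Nat.zero_le α) hαN]
    have hz : ∑ k ∈ Finset.Ico 0 α, h ((k:ℤ) - α) = 0 :=
      Finset.sum_eq_zero fun k hk => h0 _ (by
        simp only [Finset.mem_Ico] at hk; omega)
    rw [hz, zero_add]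
  rw [step1, Finset.sum_Ico_eq_sum_range]
  have step2 : ∀ k ∈ Finset.range (N - α), h (((α + k : ℕ):ℤ) - α) = h (k:ℤ) := by
    intro k _; congr 1; push_cast; ring
  rw [Finset.sum_congr rfl step2]
  apply Finset.sum_subset (Finset.range_subset_range.mpr (by omega))
  intro k hk hk2
  apply h1
  simp only [Finset.mem_range] at hk hk2
  omega

lemma Tshift (m N : ℕ) (d α : ℤ) (hα0 : 0 ≤ α) (hαN : α + 2 * 2 ^ m ≤ (N:ℤ)) :
    ∑ k ∈ Finset.range N, a m ((k:ℤ) - α) * a m ((k:ℤ) - α - d * 2 ^ m)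
      = ∑ k ∈ Finset.range N, a m k * a m ((k:ℤ) - d * 2 ^ m) := by
  have hQ : (0:ℤ) < 2 ^ m := by positivity
  lift α to ℕ using hα0
  refine shift_sum (fun j => a m j * a m (j - d * 2 ^ m)) α N ?_ ?_ ?_
  · have : (α:ℤ) ≤ N := by linarith
    exact_mod_cast this
  · intro j hj
    show a m j * a m (j - d * 2 ^ m) = 0
    rw [a_neg m j hj, zero_mul]
  · intro j hj
    show a m j * a m (j - d * 2 ^ m) = 0
    rw [a_big m j (by linarith), zero_mul]

lemma Tzero (m N : ℕ) (d : ℤ) (hd : 2 ≤ d) :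
    ∑ k ∈ Finset.range N, a m k * a m ((k:ℤ) - d * 2 ^ m) = 0 := by
  apply Finset.sum_eq_zero
  intro k _
  have hQ : (0:ℤ) < 2 ^ m := by positivity
  by_cases h : 2 * 2 ^ m - 1 ≤ (k:ℤ)
  · rw [a_big m k h, zero_mul]
  · push_neg at h
    have h2 : 2 * 2 ^ m ≤ d * 2 ^ m := mul_le_mul_of_nonneg_right hd hQ.le
    rw [a_neg m ((k:ℤ) - d * 2 ^ m) (by linarith), mul_zero]

lemma f0_eq (n N : ℕ) (hN : 2 * 2 ^ n ≤ N) :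
    f0 n = ∑ k ∈ Finset.range N, (a n (k:ℤ)) ^ 2 := by
  apply finsum_eq_finset_sum_of_support_subset
  intro k hk
  simp only [Function.mem_support] at hk
  simp only [Finset.coe_range, Set.mem_Iio]
  by_contra hk2
  push_neg at hk2
  apply hk
  have hle : ((2 * 2 ^ n : ℕ) : ℤ) ≤ (k:ℤ) := by exact_mod_cast le_trans hN hk2
  have : a n (k:ℤ) = 0 := a_big n k (by push_cast at hle; linarith)
  rw [this]; ring

lemma f1_eq (n N : ℕ) (hN : 2 * 2 ^ n ≤ N) :
    f1 n = ∑ k ∈ Finset.range N, a n (k:ℤ) * a n ((k:ℤ) - 2 ^ n) := by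
  apply finsum_eq_finset_sum_of_support_subset
  intro k hk
  simp only [Function.mem_support] at hk
  simp only [Finset.coe_range, Set.mem_Iio]
  by_contra hk2
  push_neg at hk2
  apply hk
  have hle : ((2 * 2 ^ n : ℕ) : ℤ) ≤ (k:ℤ) := by exact_mod_cast le_trans hN hk2
  have : a n (k:ℤ) = 0 := a_big n k (by push_cast at hle; linarith)
  rw [this, zero_mul]

theorem f1_recurrence (n : ℕ) (hn : 1 ≤ n) :
    f1 n = f0 (n - 1) + 2 * f1 (n - 1) := by
  obtain ⟨m, rfl⟩ : ∃ m, n = m + 1 := ⟨n - 1, by omega⟩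
  simp only [Nat.add_sub_cancel]
  set N : ℕ := 2 ^ (m + 3) with hNdef
  have hpow : (2:ℕ) ^ (m + 3) = 8 * 2 ^ m := by ring
  have hpow2 : (2:ℕ) ^ (m + 1) = 2 * 2 ^ m := by ring
  have hm1 : 1 ≤ (2:ℕ) ^ m := Nat.one_le_two_pow
  have hN1 : 2 * 2 ^ (m + 1) ≤ N := by rw [hNdef]; omega
  have hN0 : 2 * 2 ^ m ≤ N := by rw [hNdef]; omega
  have hcast : ((2:ℕ) ^ m : ℤ) = 2 ^ m := by push_cast; ring
  have hNZ : ((N:ℕ):ℤ) = 8 * 2 ^ m := by rw [hNdef]; push_cast; ring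
  rw [f1_eq (m + 1) N hN1, f0_eq m N hN0, f1_eq m N hN0]
  have key : ∀ k ∈ Finset.range N, a (m+1) (k:ℤ) * a (m+1) ((k:ℤ) - 2 ^ (m+1)) =
      a m (k:ℤ) * a m ((k:ℤ) - 2 * 2 ^ m)
    + a m (k:ℤ) * a m ((k:ℤ) - 3 * 2 ^ m)
    + a m (k:ℤ) * a m ((k:ℤ) - 4 * 2 ^ m)
    + a m ((k:ℤ) - 2 ^ m) * a m ((k:ℤ) - 2 ^ m - 1 * 2 ^ m)
    + a m ((k:ℤ) - 2 ^ m) * a m ((k:ℤ) - 2 ^ m - 2 * 2 ^ m)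
    + a m ((k:ℤ) - 2 ^ m) * a m ((k:ℤ) - 2 ^ m - 3 * 2 ^ m)
    + a m ((k:ℤ) - 2 * 2 ^ m) * a m ((k:ℤ) - 2 * 2 ^ m - 0 * 2 ^ m)
    + a m ((k:ℤ) - 2 * 2 ^ m) * a m ((k:ℤ) - 2 * 2 ^ m - 1 * 2 ^ m)
    + a m ((k:ℤ) - 2 * 2 ^ m) * a m ((k:ℤ) - 2 * 2 ^ m - 2 * 2 ^ m) := by
    intro k _
    have h2 : ((2:ℤ)) ^ (m + 1) = 2 * 2 ^ m := by ring
    rw [h2, a_succ, a_succ]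
    ring_nf
  rw [Finset.sum_congr rfl key]
  simp only [Finset.sum_add_distrib]
  have hsh : ∀ d : ℤ, ∑ k ∈ Finset.range N, a m ((k:ℤ) - 2 ^ m) * a m ((k:ℤ) - 2 ^ m - d * 2 ^ m)
      = ∑ k ∈ Finset.range N, a m (k:ℤ) * a m ((k:ℤ) - d * 2 ^ m) := by
    intro d
    exact Tshift m N d (2 ^ m) (by positivity) (by rw [hNZ]; linarith [hcast])
  have hQ : (0:ℤ) < 2 ^ m := by positivity
  have hsh2 : ∀ d : ℤ, ∑ k ∈ Finset.range N,
        a m ((k:ℤ) - 2 * 2 ^ m) * a m ((k:ℤ) - 2 * 2 ^ m - d * 2 ^ m)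
      = ∑ k ∈ Finset.range N, a m (k:ℤ) * a m ((k:ℤ) - d * 2 ^ m) := by
    intro d
    exact Tshift m N d (2 * 2 ^ m) (by positivity) (by rw [hNZ]; linarith)
  rw [hsh 1, hsh 2, hsh 3, hsh2 0, hsh2 1, hsh2 2]
  rw [Tzero m N 2 le_rfl, Tzero m N 3 (by norm_num), Tzero m N 4 (by norm_num)]
  have e0 : ∑ k ∈ Finset.range N, a m (k:ℤ) * a m ((k:ℤ) - 0 * 2 ^ m)
      = ∑ k ∈ Finset.range N, (a m (k:ℤ)) ^ 2 :=
    Finset.sum_congr rfl fun k _ => by norm_num [sq]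
  have e1 : ∑ k ∈ Finset.range N, a m (k:ℤ) * a m ((k:ℤ) - 1 * 2 ^ m)
      = ∑ k ∈ Finset.range N, a m (k:ℤ) * a m ((k:ℤ) - 2 ^ m) :=
    Finset.sum_congr rfl fun k _ => by norm_num
  rw [e0, e1]
  ring
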